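/- Let q be a power of 2 and let α ∈ F_{q⁴} generate F_{q⁴} over F_q. Then the unique involution Γ ∈ PGL₂(F_q) swapping α with α^{q²} and α^q with α^{q³} exists, and every involution in PGL₂(F_q) for q even is conjugate to the class of the matrix [[1,1],[0,1]]. -/

import Mathlib

open Matrix
open scoped LinearAlgebra.Projectivization

/-- The Möbius action of `GL(2,K)` on the projective line `ℙ K (Fin 2 → K)`.
Since scalar matrices act trivially, this realizes the action of `PGL₂(K)`. -/
noncomputable def mobius {K : Type*} [Field K] (M : GL (Fin 2) K)
    (p : ℙ K (Fin 2 → K)) : ℙ K (Fin 2 → K) :=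
  Projectivization.map
    (LinearMap.GeneralLinearGroup.toLinearEquiv
      (Matrix.GeneralLinearGroup.toLin M)).toLinearMap
    (LinearEquiv.injective _) p

/-- The point `[x : 1]` of the projective line. -/
noncomputable def pt {K : Type*} [Field K] (x : K) : ℙ K (Fin 2 → K) :=
  Projectivization.mk K ![x, 1] (by
    intro h
    simpa using congrFun h 1)

/-- `M ∈ GL₂(F)` represents a scalar (identity) element of `PGL₂(F)`. -/
def IsScalarMat {F : Type*} [Field F] (M : GL (Fin 2) F) : Prop :=
  ∃ c : F, (M : Matrix (Fin 2) (Fin 2) F) = c • (1 : Matrix (Fin 2) (Fin 2) F)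

lemma mulVec_ne_zero' {K : Type*} [Field K] (M : GL (Fin 2) K) (v : Fin 2 → K) (hv : v ≠ 0) :
    (M : Matrix (Fin 2) (Fin 2) K).mulVec v ≠ 0 := by
  intro h
  apply hv
  have h2 : ((M⁻¹ * M : GL (Fin 2) K) : Matrix (Fin 2) (Fin 2) K).mulVec v = 0 := by
    rw [Units.val_mul, ← Matrix.mulVec_mulVec, h, Matrix.mulVec_zero]
  rw [inv_mul_cancel] at h2
  simpa using h2

lemma mobius_mk {K : Type*} [Field K] (M : GL (Fin 2) K) (v : Fin 2 → K) (hv : v ≠ 0) :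
    mobius M (Projectivization.mk K v hv) =
      Projectivization.mk K ((M : Matrix (Fin 2) (Fin 2) K).mulVec v)
        (mulVec_ne_zero' M v hv) := by
  rw [mobius, Projectivization.map_mk]; rfl

lemma mulVec_pt {K : Type*} [Field K] (A : Matrix (Fin 2) (Fin 2) K) (x : K) :
    A.mulVec ![x, 1] = ![A 0 0 * x + A 0 1, A 1 0 * x + A 1 1] := by
  funext i
  fin_cases i <;> simp [Matrix.mulVec, dotProduct, Fin.sum_univ_two]

lemma vec_ne_zero {K : Type*} [Field K] (a b : K) (h : b ≠ 0) : ![a, b] ≠ 0 := by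
  intro hh
  exact h (by simpa using congrFun hh 1)

lemma mobius_pt_eq {K : Type*} [Field K] (M : GL (Fin 2) K) (x y : K)
    (hden : (M : Matrix (Fin 2) (Fin 2) K) 1 0 * x + (M : Matrix (Fin 2) (Fin 2) K) 1 1 ≠ 0)
    (heq : (M : Matrix (Fin 2) (Fin 2) K) 0 0 * x + (M : Matrix (Fin 2) (Fin 2) K) 0 1
      = y * ((M : Matrix (Fin 2) (Fin 2) K) 1 0 * x + (M : Matrix (Fin 2) (Fin 2) K) 1 1)) :
    mobius M (pt x) = pt y := by
  rw [pt, mobius_mk, pt]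
  rw [Projectivization.mk_eq_mk_iff']
  refine ⟨(M : Matrix (Fin 2) (Fin 2) K) 1 0 * x + (M : Matrix (Fin 2) (Fin 2) K) 1 1, ?_⟩
  rw [mulVec_pt]
  funext i
  fin_cases i
  · simp
    linear_combination -heq
  · simp

lemma mobius_pt_rel {K : Type*} [Field K] (M : GL (Fin 2) K) (x y : K)
    (h : mobius M (pt x) = pt y) :
    (M : Matrix (Fin 2) (Fin 2) K) 0 0 * x + (M : Matrix (Fin 2) (Fin 2) K) 0 1
      = y * ((M : Matrix (Fin 2) (Fin 2) K) 1 0 * x + (M : Matrix (Fin 2) (Fin 2) K) 1 1) := by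
  rw [pt, mobius_mk, pt, Projectivization.mk_eq_mk_iff'] at h
  obtain ⟨a, ha⟩ := h
  rw [mulVec_pt] at ha
  have h0 := congrFun ha 0
  have h1 := congrFun ha 1
  simp at h0 h1
  rw [← h0, h1]
  ring

lemma mobius_mul {K : Type*} [Field K] (A B : GL (Fin 2) K) (p : ℙ K (Fin 2 → K)) :
    mobius (A * B) p = mobius A (mobius B p) := by
  induction p using Projectivization.ind with
  | h v hv =>
    rw [mobius_mk, mobius_mk, mobius_mk]
    congr 1
    rw [Units.val_mul, ← Matrix.mulVec_mulVec]

lemma mobius_scalar {K : Type*} [Field K] (M : GL (Fin 2) K) (c : K)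
    (h : (M : Matrix (Fin 2) (Fin 2) K) = c • (1 : Matrix (Fin 2) (Fin 2) K))
    (p : ℙ K (Fin 2 → K)) : mobius M p = p := by
  have hc : c ≠ 0 := by
    intro hc
    have : (M : Matrix (Fin 2) (Fin 2) K).det = 0 := by
      rw [h, hc]; simp
    have hu := Matrix.isUnits_det_units (M : (Matrix (Fin 2) (Fin 2) K)ˣ)
    rw [this] at hu
    simp at hu
  induction p using Projectivization.ind with
  | h v hv =>
    rw [mobius_mk]
    rw [Projectivization.mk_eq_mk_iff']
    refine ⟨c, ?_⟩
    rw [h]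
    funext i
    simp [Matrix.smul_mulVec]


lemma frob_add {K : Type*} [Field K] (h2K : CharP K 2) {n q : ℕ} (hqn : q = 2 ^ n)
    (m : ℕ) (x y : K) : (x + y) ^ q ^ m = x ^ q ^ m + y ^ q ^ m := by
  haveI := Fact.mk Nat.prime_two
  subst hqn
  simp only [← pow_mul]
  exact add_pow_char_pow x y 2 (n * m)

lemma map_pow_q {F : Type*} [Field F] [Fintype F] {K : Type*} [Field K] [Algebra F K]
    {q : ℕ} (hq : Fintype.card F = q) (m : ℕ) (c : F) :
    (algebraMap F K c) ^ q ^ m = algebraMap F K c := by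
  rw [← map_pow]
  congr 1
  subst hq
  exact FiniteField.pow_card_pow m c

lemma exists_relation {F : Type*} [Field F] [Fintype F] {K : Type*} [Field K] [Fintype K]
    [Algebra F K] {q n : ℕ} (hq : Fintype.card F = q) (hqn : q = 2 ^ n)
    (h2K : CharP K 2) (s p : K)
    (hs : s ^ q ^ 2 = s) (hp : p ^ q ^ 2 = p) :
    ∃ u v w : F, ¬(u = 0 ∧ v = 0 ∧ w = 0) ∧
      algebraMap F K u + algebraMap F K v * s + algebraMap F K w * p = 0 := by
  classical
  have hq1 : 1 < q := hq ▸ Fintype.one_lt_card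
  by_cases hli : LinearIndependent F ![(1 : K), s, p]
  · exfalso
    -- the fixed submodule
    let L0 : Submodule F K :=
      { carrier := {x : K | x ^ q ^ 2 = x}
        add_mem' := by
          intro a b ha hb
          simp only [Set.mem_setOf_eq] at *
          rw [frob_add h2K hqn 2 a b, ha, hb]
        zero_mem' := by
          simp only [Set.mem_setOf_eq]
          rw [zero_pow]
          positivity
        smul_mem' := by
          intro c x hx
          simp only [Set.mem_setOf_eq] at *
          rw [Algebra.smul_def, mul_pow, map_pow_q hq 2 c, hx] }
    let W := Submodule.span F (Set.range ![(1 : K), s, p])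
    have hWL : W ≤ L0 := by
      rw [Submodule.span_le]
      rintro x ⟨i, rfl⟩
      fin_cases i
      · show (1 : K) ^ q ^ 2 = 1; simp
      · exact hs
      · exact hp
    -- card W = q ^ 3
    have hrank : Module.finrank F W = 3 := by
      rw [finrank_span_eq_card hli]
      simp
    have hcardW : Fintype.card W = q ^ 3 := by
      rw [Module.card_eq_pow_finrank (K := F) (V := W), hq, hrank]
    -- polynomial bound
    let P : Polynomial K := Polynomial.X ^ q ^ 2 - Polynomial.X
    have hdegX : (Polynomial.X : Polynomial K).natDegree < (Polynomial.X ^ q ^ 2 : Polynomial K).natDegree := by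
      rw [Polynomial.natDegree_X, Polynomial.natDegree_X_pow]
      nlinarith
    have hPdeg : P.natDegree = q ^ 2 := by
      rw [Polynomial.natDegree_sub_eq_left_of_natDegree_lt hdegX, Polynomial.natDegree_X_pow]
    have hPne : P ≠ 0 := by
      intro h
      rw [h] at hPdeg
      simp at hPdeg
      nlinarith
    have hroot : ∀ x : K, x ∈ L0 → x ∈ P.roots.toFinset := by
      intro x hx
      rw [Multiset.mem_toFinset, Polynomial.mem_roots hPne]
      simp only [Polynomial.IsRoot, P, Polynomial.eval_sub, Polynomial.eval_pow,
        Polynomial.eval_X]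
      rw [hx]
      ring
    have hinj : Fintype.card W ≤ Fintype.card {y // y ∈ P.roots.toFinset} := by
      apply Fintype.card_le_of_injective
        (fun x : W => (⟨(x : K), hroot (x : K) (hWL x.2)⟩ : {y // y ∈ P.roots.toFinset}))
      intro a b hab
      ext
      simpa using congrArg Subtype.val hab
    rw [Fintype.card_coe] at hinj
    have h2' : (P.roots.toFinset.card : ℕ) ≤ P.natDegree :=
      le_trans (Multiset.toFinset_card_le _) (Polynomial.card_roots' P)
    rw [hPdeg] at h2'
    rw [hcardW] at hinj
    have : q ^ 3 ≤ q ^ 2 := le_trans hinj h2'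
    have : q ^ 2 < q ^ 3 := Nat.pow_lt_pow_right hq1 (by norm_num)
    omega
  · rw [Fintype.not_linearIndependent_iff] at hli
    obtain ⟨g, hsum, i, hi⟩ := hli
    refine ⟨g 0, g 1, g 2, ?_, ?_⟩
    · rintro ⟨h0, h1, h2⟩
      fin_cases i <;> simp_all
    · rw [Fin.sum_univ_three] at hsum
      simp only [Matrix.cons_val_zero, Matrix.cons_val_one, Matrix.head_cons] at hsum
      rw [← hsum]
      simp [Algebra.smul_def]


lemma part_two {F : Type*} [Field F] [Fintype F] (h2 : CharP F 2)
    (M : GL (Fin 2) F) (hns : ¬ IsScalarMat M) (hsq : IsScalarMat (M * M)) :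
    ∃ Φ : GL (Fin 2) F, ∃ c : Fˣ,
      ((Φ * M * Φ⁻¹ : GL (Fin 2) F) : Matrix (Fin 2) (Fin 2) F) =
        (c : F) • !![1, 1; 0, 1] := by
  haveI := h2
  have h20 : (2 : F) = 0 := by
    have := CharP.cast_eq_zero F 2
    simpa using this
  obtain ⟨lam, hlam⟩ := hsq
  set m : Matrix (Fin 2) (Fin 2) F := (M : Matrix (Fin 2) (Fin 2) F) with hm
  have hmul : m * m = lam • 1 := by
    rw [hm, ← Units.val_mul]
    exact hlam
  set a := m 0 0 with ha
  set b := m 0 1 with hbd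
  set c0 := m 1 0 with hcd
  set d := m 1 1 with hdd
  have e00 : a * a + b * c0 = lam := by
    have := congrFun (congrFun hmul 0) 0
    simpa [Matrix.mul_apply, Fin.sum_univ_two] using this
  have e11 : c0 * b + d * d = lam := by
    have := congrFun (congrFun hmul 1) 1
    simpa [Matrix.mul_apply, Fin.sum_univ_two] using this
  have hda : d = a := by
    have h1 : (a - d) * (a - d) = 0 := by
      linear_combination e00 - e11 + (d * d - a * d) * h20
    have := mul_self_eq_zero.mp h1
    exact (sub_eq_zero.mp this).symm
  have hdetm : m.det ≠ 0 := by
    have hu := Matrix.isUnits_det_units (M : (Matrix (Fin 2) (Fin 2) F)ˣ)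
    exact IsUnit.ne_zero hu
  have hdet2 : m.det = a * d - b * c0 := Matrix.det_fin_two m
  -- square root of det
  have hsqrt : ∀ y : F, ∃ x : F, x * x = y := by
    intro y
    have hinj : Function.Injective (fun x : F => x * x) := by
      intro x y h
      simp only at h
      have h1 : (x + y) * (x + y) = 0 := by
        linear_combination h + (x * y + y * y) * h20
      have h2' := mul_self_eq_zero.mp h1
      have : x = -y := eq_neg_of_add_eq_zero_left h2'
      rwa [CharTwo.neg_eq] at this
    exact Finite.injective_iff_surjective.mp hinj y
  obtain ⟨c, hc⟩ := hsqrt m.det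
  have hcne : c ≠ 0 := by
    intro h
    rw [h] at hc
    simp at hc
    exact hdetm hc.symm
  have hkey : c * c = a * a - b * c0 := by rw [hc, hdet2, hda]
  -- not both off-diagonals are zero
  have hbc : ¬(b = 0 ∧ c0 = 0) := by
    rintro ⟨hb, hc0⟩
    apply hns
    refine ⟨a, ?_⟩
    ext i j
    fin_cases i <;> fin_cases j
    · simp [Matrix.one_apply]; rfl
    · simpa [Matrix.one_apply] using hb
    · simpa [Matrix.one_apply] using hc0
    · simpa [Matrix.one_apply] using hda
  by_cases hc0 : c0 ≠ 0
  · -- P = !![a+c, c; c0, 0]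
    set P : Matrix (Fin 2) (Fin 2) F := !![a + c, c; c0, 0] with hP
    have hdP : P.det ≠ 0 := by
      rw [Matrix.det_fin_two]
      simp [hP]
      exact ⟨hcne, hc0⟩
    have hMP : m * P = P * ((c : F) • !![1, 1; 0, 1]) := by
      ext i j
      fin_cases i <;> fin_cases j <;>
        simp [hP, Matrix.mul_apply, Fin.sum_univ_two, ← ha, ← hbd, ← hcd, ← hdd]
      · linear_combination -hkey + b * c0 * h20
      · linear_combination (-(c * c)) * h20
      · linear_combination c0 * hda + c0 * a * h20
    set Pu : GL (Fin 2) F := Matrix.GeneralLinearGroup.mkOfDetNeZero P hdP with hPu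
    refine ⟨Pu⁻¹, Units.mk0 c hcne, ?_⟩
    have hPuv : (Pu : Matrix (Fin 2) (Fin 2) F) = P := rfl
    rw [inv_inv]
    have hinv : (↑Pu⁻¹ : Matrix (Fin 2) (Fin 2) F) * P = 1 := by
      rw [← hPuv, ← Units.val_mul, inv_mul_cancel, Units.val_one]
    rw [Units.val_mul, Units.val_mul, hPuv, ← hm, mul_assoc, hMP, ← mul_assoc, hinv, one_mul]
    rfl
  · push_neg at hc0
    have hb : b ≠ 0 := by
      intro hb
      exact hbc ⟨hb, hc0⟩
    set P : Matrix (Fin 2) (Fin 2) F := !![b, 0; a + c, c] with hP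
    have hdP : P.det ≠ 0 := by
      rw [Matrix.det_fin_two]
      simp [hP]
      exact ⟨hb, hcne⟩
    have hMP : m * P = P * ((c : F) • !![1, 1; 0, 1]) := by
      ext i j
      fin_cases i <;> fin_cases j <;>
        simp [hP, Matrix.mul_apply, Fin.sum_univ_two, ← ha, ← hbd, ← hcd, ← hdd]
      · linear_combination a * b * h20
      · linear_combination 2 * b * hc0 + (a + c) * hda - hkey
      · linear_combination c * hda - c * c * h20
    set Pu : GL (Fin 2) F := Matrix.GeneralLinearGroup.mkOfDetNeZero P hdP with hPu
    refine ⟨Pu⁻¹, Units.mk0 c hcne, ?_⟩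
    have hPuv : (Pu : Matrix (Fin 2) (Fin 2) F) = P := rfl
    rw [inv_inv]
    have hinv : (↑Pu⁻¹ : Matrix (Fin 2) (Fin 2) F) * P = 1 := by
      rw [← hPuv, ← Units.val_mul, inv_mul_cancel, Units.val_one]
    rw [Units.val_mul, Units.val_mul, hPuv, ← hm, mul_assoc, hMP, ← mul_assoc, hinv, one_mul]
    rfl


lemma pt_inj {K : Type*} [Field K] {x y : K} (h : pt x = pt y) : x = y := by
  rw [pt, pt, Projectivization.mk_eq_mk_iff'] at h
  obtain ⟨a, ha⟩ := h
  have h1 := congrFun ha 1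
  have h0 := congrFun ha 0
  simp at h0 h1
  rw [h1] at h0
  simpa using h0.symm

lemma mobius_one {K : Type*} [Field K] (p : ℙ K (Fin 2 → K)) : mobius 1 p = p :=
  mobius_scalar 1 1 (by simp) p

/-- Let `q` be a power of `2`, `F` the field with `q` elements, `K = F_{q⁴}`, and `α ∈ K`
a generator of `K` over `F`.  Then: (1) there is a (unique, as an element of `PGL₂(F)`)
involution in `PGL₂(F)` swapping `α` with `α^{q²}` and `α^q` with `α^{q³}`; and
(2) every involution in `PGL₂(F)` (a nonidentity class `M` with `M²` scalar) is conjugate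
in `PGL₂(F)` to the class of the matrix `[[1,1],[0,1]]`. -/
theorem char_two_involutions
    {F : Type*} [Field F] [Fintype F] (q : ℕ) (hq : Fintype.card F = q)
    (h2 : CharP F 2)
    {K : Type*} [Field K] [Fintype K] [Algebra F K]
    (hK : Fintype.card K = q ^ 4)
    (α : K) (hgen : α ^ q ^ 2 ≠ α) :
    (∃ M : GL (Fin 2) F,
      mobius (Matrix.GeneralLinearGroup.map (algebraMap F K) M) (pt α) = pt (α ^ q ^ 2) ∧
      mobius (Matrix.GeneralLinearGroup.map (algebraMap F K) M) (pt (α ^ q ^ 2)) = pt α ∧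
      mobius (Matrix.GeneralLinearGroup.map (algebraMap F K) M) (pt (α ^ q)) = pt (α ^ q ^ 3) ∧
      mobius (Matrix.GeneralLinearGroup.map (algebraMap F K) M) (pt (α ^ q ^ 3)) = pt (α ^ q) ∧
      (∀ p, mobius (Matrix.GeneralLinearGroup.map (algebraMap F K) M)
        (mobius (Matrix.GeneralLinearGroup.map (algebraMap F K) M) p) = p) ∧
      ¬ IsScalarMat M ∧
      (∀ M' : GL (Fin 2) F,
        mobius (Matrix.GeneralLinearGroup.map (algebraMap F K) M') (pt α) = pt (α ^ q ^ 2) →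
        mobius (Matrix.GeneralLinearGroup.map (algebraMap F K) M') (pt (α ^ q ^ 2)) = pt α →
        mobius (Matrix.GeneralLinearGroup.map (algebraMap F K) M') (pt (α ^ q)) = pt (α ^ q ^ 3) →
        mobius (Matrix.GeneralLinearGroup.map (algebraMap F K) M') (pt (α ^ q ^ 3)) = pt (α ^ q) →
        ∀ p, mobius (Matrix.GeneralLinearGroup.map (algebraMap F K) M') p =
          mobius (Matrix.GeneralLinearGroup.map (algebraMap F K) M) p)) ∧
    (∀ M : GL (Fin 2) F, ¬ IsScalarMat M → IsScalarMat (M * M) →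
      ∃ Φ : GL (Fin 2) F, ∃ c : Fˣ,
        ((Φ * M * Φ⁻¹ : GL (Fin 2) F) : Matrix (Fin 2) (Fin 2) F) =
          (c : F) • !![1, 1; 0, 1]) := by
  haveI := h2
  haveI h2K : CharP K 2 := charP_of_injective_algebraMap (algebraMap F K).injective 2
  refine ⟨?_, fun M hns hsq => part_two h2 M hns hsq⟩
  obtain ⟨n, -, hqn0⟩ := FiniteField.card F 2
  rw [hq] at hqn0
  have hqn : q = 2 ^ (n : ℕ) := hqn0
  have hq1 : 1 < q := hq ▸ Fintype.one_lt_card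
  have hq0 : q ≠ 0 := by omega
  set φ := algebraMap F K with hφ
  have φinj : Function.Injective φ := (algebraMap F K).injective
  have h20K : (2 : K) = 0 := by
    have := CharP.cast_eq_zero K 2
    simpa using this
  have h20F : (2 : F) = 0 := by
    have := CharP.cast_eq_zero F 2
    simpa using this
  have fa : ∀ (m : ℕ) (x y : K), (x + y) ^ q ^ m = x ^ q ^ m + y ^ q ^ m :=
    fun m x y => frob_add h2K hqn m x y
  have fc : ∀ (m : ℕ) (c : F), φ c ^ q ^ m = φ c := fun m c => map_pow_q hq m c
  have f4 : ∀ x : K, x ^ q ^ 4 = x := by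
    intro x
    rw [← hK]
    exact FiniteField.pow_card x
  have hpow : ∀ (i j : ℕ) (x : K), (x ^ q ^ i) ^ q ^ j = x ^ q ^ (i + j) := by
    intro i j x
    rw [← pow_mul, ← pow_add]
  have hqone : ∀ x : K, x ^ q = x ^ q ^ 1 := fun x => by rw [pow_one]
  -- basic conjugate facts
  have hb2 : (α ^ q ^ 2) ^ q ^ 2 = α := by rw [hpow]; exact f4 α
  have hbq : (α ^ q ^ 2) ^ q = α ^ q ^ 3 := by rw [hqone, hpow]
  have hb3q : (α ^ q ^ 3) ^ q = α := by rw [hqone, hpow]; exact f4 α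
  have haq2 : (α ^ q) ^ q = α ^ q ^ 2 := by
    rw [hqone, hqone, hpow]
  -- distinctness
  have hne01 : α ≠ α ^ q := by
    intro h
    apply hgen
    rw [← haq2, ← h, ← h]
  have hne02 : α ≠ α ^ q ^ 2 := fun h => hgen h.symm
  have hne12 : α ^ q ≠ α ^ q ^ 2 := by
    intro h
    have h2a : α ^ q ^ 2 = α ^ q ^ 3 := by
      have := congrArg (· ^ q) h
      simpa [haq2, hbq] using this
    have h3a : α ^ q ^ 3 = α := by
      have := congrArg (· ^ q) h2a
      simpa [hbq, hb3q] using this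
    apply hne01
    rw [h, h2a, h3a]
  -- s and p
  have hαF : ∀ c : F, α ≠ φ c := by
    intro c h
    apply hgen
    rw [h, fc]
  have hβF : ∀ c : F, α ^ q ^ 2 ≠ φ c := by
    intro c h
    apply hgen
    have : (α ^ q ^ 2) ^ q ^ 2 = α ^ q ^ 2 := by rw [h, fc]
    rw [hb2] at this
    exact this.symm
  have hs : (α + α ^ q ^ 2) ^ q ^ 2 = α + α ^ q ^ 2 := by
    rw [fa, hpow, f4]
    ring
  have hp : (α * α ^ q ^ 2) ^ q ^ 2 = α * α ^ q ^ 2 := by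
    rw [mul_pow, hpow, f4]
    ring
  obtain ⟨u, v, w, hnon, hrel⟩ :=
    exists_relation hq hqn h2K (α + α ^ q ^ 2) (α * α ^ q ^ 2) hs hp
  rw [← hφ] at hrel
  -- the matrix
  have hdetA : (!![v, u; w, v] : Matrix (Fin 2) (Fin 2) F).det ≠ 0 := by
    rw [Matrix.det_fin_two_of]
    intro hd
    -- v*v - u*w = 0
    by_cases hw : w = 0
    · have hv : v = 0 := by
        have : v * v = 0 := by linear_combination hd + u * hw
        exact mul_self_eq_zero.mp this
      apply hnon
      refine ⟨?_, hv, hw⟩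
      have : φ u = 0 := by
        rw [hv, hw] at hrel
        simpa using hrel
      exact φinj (by simpa using this)
    · have hfac : (φ w * α + φ v) * (φ w * (α ^ q ^ 2) + φ v) = 0 := by
        have hd' : φ (v * v - u * w) = 0 := by rw [hd, map_zero]
        rw [map_sub, _root_.map_mul, _root_.map_mul] at hd'
        linear_combination φ w * hrel + hd'
      rcases mul_eq_zero.mp hfac with h | h
      · have hφw : φ w ≠ 0 := fun hh => hw (φinj (by simpa using hh))
        apply hαF (-(v / w))
        rw [map_neg, map_div₀]
        field_simp
        linear_combination h
      · have hφw : φ w ≠ 0 := fun hh => hw (φinj (by simpa using hh))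
        apply hβF (-(v / w))
        rw [map_neg, map_div₀]
        field_simp
        linear_combination h
  
  -- denominators
  have hden0 : φ w * α + φ v ≠ 0 := by
    intro h
    by_cases hw : w = 0
    · rw [hw, map_zero, zero_mul, zero_add] at h
      have hv : v = 0 := φinj (by simpa using h)
      apply hnon
      refine ⟨?_, hv, hw⟩
      rw [hv, hw] at hrel
      simp at hrel
      exact φinj (by simpa using hrel)
    · have hφw : φ w ≠ 0 := fun hh => hw (φinj (by simpa using hh))
      apply hαF (-(v / w))
      rw [map_neg, map_div₀]
      field_simp
      linear_combination h
  have hden2 : φ w * α ^ q ^ 2 + φ v ≠ 0 := by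
    intro h
    by_cases hw : w = 0
    · rw [hw, map_zero, zero_mul, zero_add] at h
      have hv : v = 0 := φinj (by simpa using h)
      apply hnon
      refine ⟨?_, hv, hw⟩
      rw [hv, hw] at hrel
      simp at hrel
      exact φinj (by simpa using hrel)
    · have hφw : φ w ≠ 0 := fun hh => hw (φinj (by simpa using hh))
      apply hβF (-(v / w))
      rw [map_neg, map_div₀]
      field_simp
      linear_combination h
  have hdenq : φ w * α ^ q + φ v ≠ 0 := by
    intro h
    apply hden0
    have h1 : (φ w * α ^ q + φ v) ^ q ^ 3 = 0 := by
      rw [h]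
      exact zero_pow (pow_ne_zero 3 hq0)
    rw [fa 3, mul_pow, fc 3, fc 3] at h1
    have hα4 : (α ^ q) ^ q ^ 3 = α := by
      rw [hqone α, hpow]
      exact f4 α
    rwa [hα4] at h1
  have hdenq3 : φ w * α ^ q ^ 3 + φ v ≠ 0 := by
    intro h
    apply hden0
    have h1 : (φ w * α ^ q ^ 3 + φ v) ^ q ^ 1 = 0 := by
      rw [h]
      exact zero_pow (pow_ne_zero 1 hq0)
    rw [fa 1, mul_pow, fc 1, fc 1] at h1
    have hα4 : (α ^ q ^ 3) ^ q ^ 1 = α := by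
      rw [pow_one]
      exact hb3q
    rwa [hα4] at h1
  -- relation raised to the q
  have hrelq : φ u + φ v * (α ^ q + α ^ q ^ 3) + φ w * (α ^ q * α ^ q ^ 3) = 0 := by
    have h1 : (φ u + φ v * (α + α ^ q ^ 2) + φ w * (α * α ^ q ^ 2)) ^ q ^ 1 = 0 := by
      rw [hrel]
      exact zero_pow (pow_ne_zero 1 hq0)
    rw [fa 1, fa 1, mul_pow, mul_pow, fa 1, mul_pow, fc 1, fc 1, fc 1] at h1
    rw [pow_one q] at h1
    rw [hbq] at h1
    exact h1
  -- the GL element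
  set Ψ : GL (Fin 2) F →* GL (Fin 2) K := Matrix.GeneralLinearGroup.map (algebraMap F K) with hΨ
  set M : GL (Fin 2) F := Matrix.GeneralLinearGroup.mkOfDetNeZero !![v, u; w, v] hdetA with hM
  have hMv : (M : Matrix (Fin 2) (Fin 2) F) = !![v, u; w, v] := rfl
  have hMKv : ((Ψ M : GL (Fin 2) K) : Matrix (Fin 2) (Fin 2) K) = !![φ v, φ u; φ w, φ v] := by
    have h0 : ((Ψ M : GL (Fin 2) K) : Matrix (Fin 2) (Fin 2) K)
        = ((M : Matrix (Fin 2) (Fin 2) F)).map φ := rfl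
    rw [h0, hMv]
    ext i j
    fin_cases i <;> fin_cases j <;> simp [Matrix.map_apply]
  have c1 : mobius (Ψ M) (pt α) = pt (α ^ q ^ 2) := by
    apply mobius_pt_eq
    · rw [hMKv]; simpa using hden0
    · rw [hMKv]
      simp
      linear_combination hrel - (φ v * α ^ q ^ 2 + φ w * α * α ^ q ^ 2) * h20K
  have c2 : mobius (Ψ M) (pt (α ^ q ^ 2)) = pt α := by
    apply mobius_pt_eq
    · rw [hMKv]; simpa using hden2
    · rw [hMKv]
      simp
      linear_combination hrel - (φ v * α + φ w * α * α ^ q ^ 2) * h20K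
  have c3 : mobius (Ψ M) (pt (α ^ q)) = pt (α ^ q ^ 3) := by
    apply mobius_pt_eq
    · rw [hMKv]; simpa using hdenq
    · rw [hMKv]
      simp
      linear_combination hrelq - (φ v * α ^ q ^ 3 + φ w * α ^ q * α ^ q ^ 3) * h20K
  have c4 : mobius (Ψ M) (pt (α ^ q ^ 3)) = pt (α ^ q) := by
    apply mobius_pt_eq
    · rw [hMKv]; simpa using hdenq3
    · rw [hMKv]
      simp
      linear_combination hrelq - (φ v * α ^ q + φ w * α ^ q * α ^ q ^ 3) * h20K
  -- involution
  have hM2 : ((M * M : GL (Fin 2) F) : Matrix (Fin 2) (Fin 2) F) = (v * v + u * w) • 1 := by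
    rw [Units.val_mul, hMv]
    ext i j
    fin_cases i <;> fin_cases j <;>
      simp [Matrix.mul_apply, Fin.sum_univ_two, Matrix.one_apply]
    · linear_combination (v * u) * h20F
    · linear_combination (v * w) * h20F
    · ring
  have hNp : ∀ pp, mobius (Ψ (M * M)) pp = pp := by
    intro pp
    apply mobius_scalar _ (φ (v * v + u * w))
    have h0 : ((Ψ (M * M) : GL (Fin 2) K) : Matrix (Fin 2) (Fin 2) K)
        = ((M * M : GL (Fin 2) F) : Matrix (Fin 2) (Fin 2) F).map φ := rfl
    rw [h0, hM2]
    ext i j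
    fin_cases i <;> fin_cases j <;> simp [Matrix.map_apply, Matrix.one_apply]
  have hinv : ∀ p, mobius (Ψ M) (mobius (Ψ M) p) = p := by
    intro p
    rw [← mobius_mul, ← MonoidHom.map_mul]
    exact hNp p
  -- nonscalar
  have hnsM : ¬ IsScalarMat M := by
    rintro ⟨c, hcs⟩
    rw [hMv] at hcs
    have hu : u = 0 := by
      have := congrFun (congrFun hcs 0) 1
      simpa [Matrix.one_apply] using this
    have hw : w = 0 := by
      have := congrFun (congrFun hcs 1) 0
      simpa [Matrix.one_apply] using this
    have hsne : α + α ^ q ^ 2 ≠ 0 := by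
      intro h0
      apply hgen
      have h1 : α ^ q ^ 2 = -α := eq_neg_of_add_eq_zero_right h0
      rwa [CharTwo.neg_eq] at h1
    have hv : v = 0 := by
      rw [hu, hw] at hrel
      simp only [map_zero, zero_mul, zero_add, add_zero] at hrel
      rcases mul_eq_zero.mp hrel with h | h
      · exact φinj (by simpa using h)
      · exact absurd h hsne
    exact hnon ⟨hu, hv, hw⟩
  refine ⟨M, c1, c2, c3, c4, hinv, hnsM, ?_⟩
  -- uniqueness
  intro M' h1' h2' h3' h4' p
  have hswap : ∀ (A : GL (Fin 2) F) (x y : K),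
      mobius (Ψ A) (pt x) = pt y → mobius (Ψ A⁻¹) (pt y) = pt x := by
    intro A x y h
    rw [← h, ← mobius_mul, ← MonoidHom.map_mul, inv_mul_cancel, MonoidHom.map_one]
    exact mobius_one _
  set N : GL (Fin 2) F := M'⁻¹ * M with hN
  have hNK : (Ψ N : GL (Fin 2) K) = Ψ M'⁻¹ * Ψ M := by rw [hN, MonoidHom.map_mul]
  have hfix : ∀ x y : K,
      mobius (Ψ M) (pt x) = pt y → mobius (Ψ M') (pt x) = pt y →
      mobius (Ψ N) (pt x) = pt x := by
    intro x y hMx hM'x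
    rw [hNK, mobius_mul, hMx]
    exact hswap M' x y hM'x
  have heij : ∀ i j, ((Ψ N : GL (Fin 2) K) : Matrix (Fin 2) (Fin 2) K) i j
      = φ ((N : Matrix (Fin 2) (Fin 2) F) i j) := fun i j => rfl
  have e0 := mobius_pt_rel _ α α (hfix α (α ^ q ^ 2) c1 h1')
  have e1 := mobius_pt_rel _ (α ^ q) (α ^ q) (hfix (α ^ q) (α ^ q ^ 3) c3 h3')
  have e2 := mobius_pt_rel _ (α ^ q ^ 2) (α ^ q ^ 2) (hfix (α ^ q ^ 2) α c2 h2')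
  simp only [heij] at e0 e1 e2
  set nm : Matrix (Fin 2) (Fin 2) F := (N : Matrix (Fin 2) (Fin 2) F) with hnm
  have k1 : (α - α ^ q) * ((φ (nm 0 0) - φ (nm 1 1)) - φ (nm 1 0) * (α + α ^ q)) = 0 := by
    linear_combination e0 - e1
  have k1' : φ (nm 0 0) - φ (nm 1 1) = φ (nm 1 0) * (α + α ^ q) := by
    rcases mul_eq_zero.mp k1 with h | h
    · exact absurd (sub_eq_zero.mp h) hne01
    · linear_combination h
  have k2 : (α ^ q - α ^ q ^ 2) *
      ((φ (nm 0 0) - φ (nm 1 1)) - φ (nm 1 0) * (α ^ q + α ^ q ^ 2)) = 0 := by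
    linear_combination e1 - e2
  have k2' : φ (nm 0 0) - φ (nm 1 1) = φ (nm 1 0) * (α ^ q + α ^ q ^ 2) := by
    rcases mul_eq_zero.mp k2 with h | h
    · exact absurd (sub_eq_zero.mp h) hne12
    · linear_combination h
  have k3 : φ (nm 1 0) * (α - α ^ q ^ 2) = 0 := by linear_combination k2' - k1'
  have hn10 : nm 1 0 = 0 := by
    rcases mul_eq_zero.mp k3 with h | h
    · exact φinj (by simpa using h)
    · exact absurd (sub_eq_zero.mp h) hne02
  have hn0011 : nm 0 0 = nm 1 1 := by
    apply φinj
    rw [hn10, map_zero, zero_mul] at k1'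
    have := sub_eq_zero.mp k1'
    exact this
  have hn01 : nm 0 1 = 0 := by
    apply φinj
    rw [map_zero]
    rw [hn10, map_zero, hn0011] at e0
    linear_combination e0
  have hNs : nm = (nm 0 0) • 1 := by
    ext i j
    fin_cases i <;> fin_cases j
    · simp
    · simpa using hn01
    · simpa using hn10
    · simpa using hn0011.symm
  have hNp2 : ∀ pp, mobius (Ψ N) pp = pp := by
    intro pp
    apply mobius_scalar _ (φ (nm 0 0))
    have h0 : ((Ψ N : GL (Fin 2) K) : Matrix (Fin 2) (Fin 2) K) = nm.map φ := rfl
    rw [h0, hNs]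
    ext i j
    fin_cases i <;> fin_cases j <;> simp [Matrix.map_apply, Matrix.one_apply]
  have hMeq : M = M' * N := by rw [hN, mul_inv_cancel_left]
  rw [hMeq, MonoidHom.map_mul, mobius_mul, hNp2]
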